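/- For every natural number n ≥ 1, a Heyting algebra A has depth at most n (no chain of n+1 elements in its dual Esakia space) if and only if A satisfies the equation d_n ≈ 1, where d_1 = x_1 ∨ (x_1 → 0) and d_{k+1} = x_{k+1} ∨ (x_{k+1} → d_k). Consequently, the class D_n of Heyting algebras of depth at most n is a variety. -/
import Mathlib


/- STATEMENT 10: For n ≥ 1, a Heyting algebra has depth at most n iff it satisfies
d_n ≈ 1, where d_1 = x_1 ∨ (x_1 → 0) and d_{k+1} = x_{k+1} ∨ (x_{k+1} → d_k);
consequently D_n is a variety. -/

/-- A bundled Heyting algebra. -/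
structure HAlg where
  carrier : Type
  [str : HeytingAlgebra carrier]

attribute [instance] HAlg.str

/-- Heyting terms over countably many variables. -/
inductive HTerm : Type
  | var : ℕ → HTerm
  | bot : HTerm
  | top : HTerm
  | inf : HTerm → HTerm → HTerm
  | sup : HTerm → HTerm → HTerm
  | himp : HTerm → HTerm → HTerm

/-- Evaluation of a Heyting term in a Heyting algebra. -/
def HTerm.eval {α : Type} [HeytingAlgebra α] (v : ℕ → α) : HTerm → α
  | HTerm.var i => v i
  | HTerm.bot => ⊥
  | HTerm.top => ⊤
  | HTerm.inf t s => t.eval v ⊓ s.eval v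
  | HTerm.sup t s => t.eval v ⊔ s.eval v
  | HTerm.himp t s => t.eval v ⇨ s.eval v

/-- The equation t ≈ s holds in α. -/
def Models (α : Type) [HeytingAlgebra α] (t s : HTerm) : Prop :=
  ∀ v : ℕ → α, t.eval v = s.eval v

/-- A class of Heyting algebras. -/
def HAClass : Type 1 := HAlg → Prop

/-- A variety of Heyting algebras: an equationally axiomatized class. -/
def IsVariety (K : HAClass) : Prop :=
  ∃ E : Set (HTerm × HTerm), ∀ A : HAlg, K A ↔ ∀ p ∈ E, Models A.carrier p.1 p.2

/-- `f` is an epimorphism in the category of members of `K` with Heyting homomorphisms. -/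
def IsEpiIn (K : HAClass) {α β : Type} [HeytingAlgebra α] [HeytingAlgebra β]
    (f : HeytingHom α β) : Prop :=
  ∀ C : HAlg, K C → ∀ g h : HeytingHom β C.carrier, g.comp f = h.comp f → g = h

/-- `K` has the ES property: every epimorphism between members of `K` is surjective. -/
def HasES (K : HAClass) : Prop :=
  ∀ A B : HAlg, K A → K B → ∀ f : HeytingHom A.carrier B.carrier,
    IsEpiIn K f → Function.Surjective f

/-- A prime filter of a Heyting algebra: a nonempty proper upward-closed subset, closed
under meets, such that x ⊔ y ∈ F implies x ∈ F or y ∈ F. -/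
def IsPrimeFilter {α : Type} [HeytingAlgebra α] (F : Set α) : Prop :=
  F.Nonempty ∧ F ≠ Set.univ ∧
  (∀ x ∈ F, ∀ y, x ≤ y → y ∈ F) ∧
  (∀ x ∈ F, ∀ y ∈ F, x ⊓ y ∈ F) ∧
  (∀ x y : α, x ⊔ y ∈ F → x ∈ F ∨ y ∈ F)

/-- Width at most n: in the dual Esakia space (prime filters ordered by inclusion),
no upset ↑F contains an antichain of n+1 elements. -/
def WidthAtMost (n : ℕ) (A : HAlg) : Prop :=
  ∀ F : Set A.carrier, IsPrimeFilter F →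
    ∀ G : Fin (n + 1) → Set A.carrier,
      (∀ i, IsPrimeFilter (G i) ∧ F ⊆ G i) →
      (∀ i j, i ≠ j → ¬ G i ⊆ G j) → False

/-- Membership in the subalgebra generated by S. -/
inductive InSubalg {α : Type} [HeytingAlgebra α] (S : Set α) : α → Prop
  | mem : ∀ {a}, a ∈ S → InSubalg S a
  | bot : InSubalg S ⊥
  | top : InSubalg S ⊤
  | inf : ∀ {a b}, InSubalg S a → InSubalg S b → InSubalg S (a ⊓ b)
  | sup : ∀ {a b}, InSubalg S a → InSubalg S b → InSubalg S (a ⊔ b)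
  | himp : ∀ {a b}, InSubalg S a → InSubalg S b → InSubalg S (a ⇨ b)

/-- Depth at most n: no chain of n+1 elements in the dual Esakia space (prime filters
ordered by inclusion). -/
def DepthAtMost (n : ℕ) (A : HAlg) : Prop :=
  ∀ G : Fin (n + 1) → Set A.carrier,
    (∀ i, IsPrimeFilter (G i)) → (∀ i j, i < j → G i ⊂ G j) → False

/-- The terms d_n: dTerm 1 = x₁ ∨ (x₁ → ⊥), dTerm (k+1) = x_{k+1} ∨ (x_{k+1} → dTerm k). -/
def dTerm : ℕ → HTerm
  | 0 => HTerm.bot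
  | k + 1 => HTerm.sup (HTerm.var (k + 1)) (HTerm.himp (HTerm.var (k + 1)) (dTerm k))

section Aux

variable {α : Type} [HeytingAlgebra α]

def IsFilter' (F : Set α) : Prop :=
  F.Nonempty ∧ (∀ x ∈ F, ∀ y, x ≤ y → y ∈ F) ∧ (∀ x ∈ F, ∀ y ∈ F, x ⊓ y ∈ F)

lemma top_mem_of_filter {F : Set α} (h : IsFilter' F) : ⊤ ∈ F := by
  obtain ⟨⟨x, hx⟩, hup, _⟩ := h
  exact hup x hx ⊤ le_top

lemma top_mem_of_prime {F : Set α} (h : IsPrimeFilter F) : ⊤ ∈ F := by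
  obtain ⟨⟨x, hx⟩, _, hup, _⟩ := h
  exact hup x hx ⊤ le_top

lemma bot_not_mem_of_prime {F : Set α} (h : IsPrimeFilter F) : ⊥ ∉ F := by
  obtain ⟨_, hproper, hup, _⟩ := h
  intro hb
  exact hproper (Set.eq_univ_of_forall fun y => hup ⊥ hb y bot_le)

/-- prime filter extension lemma -/
lemma exists_prime_extension (F : Set α) (hF : IsFilter' F) (b : α)
    (hdisj : ∀ x ∈ F, ¬ x ≤ b) :
    ∃ P : Set α, IsPrimeFilter P ∧ F ⊆ P ∧ ∀ x ∈ P, ¬ x ≤ b := by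
  set S : Set (Set α) := {G | IsFilter' G ∧ F ⊆ G ∧ ∀ x ∈ G, ¬ x ≤ b} with hS
  have hchainub : ∀ c ⊆ S, IsChain (· ⊆ ·) c → c.Nonempty →
      ∃ ub ∈ S, ∀ s ∈ c, s ⊆ ub := by
    intro c hcS hchain hcne
    refine ⟨⋃₀ c, ⟨⟨⟨?_, ?_, ?_⟩, ?_, ?_⟩, fun s hs => Set.subset_sUnion_of_mem hs⟩⟩
    · obtain ⟨s, hs⟩ := hcne
      obtain ⟨x, hx⟩ := (hcS hs).1.1
      exact ⟨x, s, hs, hx⟩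
    · rintro x ⟨s, hs, hx⟩ y hxy
      exact ⟨s, hs, (hcS hs).1.2.1 x hx y hxy⟩
    · rintro x ⟨s, hs, hx⟩ y ⟨t, ht, hy⟩
      rcases hchain.total hs ht with h | h
      · exact ⟨t, ht, (hcS ht).1.2.2 x (h hx) y hy⟩
      · exact ⟨s, hs, (hcS hs).1.2.2 x hx y (h hy)⟩
    · obtain ⟨s, hs⟩ := hcne
      exact ((hcS hs).2.1).trans (Set.subset_sUnion_of_mem hs)
    · rintro x ⟨s, hs, hx⟩
      exact (hcS hs).2.2 x hx
  obtain ⟨P, hFP, hPS, hmax⟩ := zorn_subset_nonempty S hchainub F ⟨hF, subset_rfl, hdisj⟩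
  · obtain ⟨hPfil, hFsub, hPdisj⟩ := hPS
    refine ⟨P, ⟨hPfil.1, ?_, hPfil.2.1, hPfil.2.2, ?_⟩, hFsub, hPdisj⟩
    · intro hP
      exact hPdisj b (hP ▸ Set.mem_univ b) le_rfl
    · intro x y hxy
      by_contra h
      push_neg at h
      obtain ⟨hx, hy⟩ := h
      -- filter generated by P and x meets ↓b, by maximality
      have key : ∀ z : α, z ∉ P → ∃ p ∈ P, p ⊓ z ≤ b := by
        intro z hz
        by_contra hc
        push_neg at hc
        set Q : Set α := {w | ∃ p ∈ P, p ⊓ z ≤ w} with hQ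
        have hPQ : P ⊆ Q := fun p hp => ⟨p, hp, inf_le_left⟩
        have hzQ : z ∈ Q := ⟨⊤, top_mem_of_filter hPfil, by simp⟩
        have hQS : Q ∈ S := by
          refine ⟨⟨⟨z, hzQ⟩, ?_, ?_⟩, hFsub.trans hPQ, ?_⟩
          · rintro w ⟨p, hp, hle⟩ y' hwy'
            exact ⟨p, hp, hle.trans hwy'⟩
          · rintro w ⟨p, hp, hle⟩ w' ⟨p', hp', hle'⟩
            exact ⟨p ⊓ p', hPfil.2.2 p hp p' hp',
              by rw [inf_inf_distrib_right]; exact inf_le_inf hle hle'⟩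
          · rintro w ⟨p, hp, hle⟩ hwb
            exact hc p hp (hle.trans hwb)
        have := hmax hQS hPQ
        exact hz (this hzQ)
      obtain ⟨p, hp, hpx⟩ := key x hx
      obtain ⟨q, hq, hqy⟩ := key y hy
      have hm : (p ⊓ q) ⊓ (x ⊔ y) ∈ P :=
        hPfil.2.2 _ (hPfil.2.2 p hp q hq) _ hxy
      have hle : (p ⊓ q) ⊓ (x ⊔ y) ≤ b := by
        rw [inf_sup_left]
        refine sup_le ?_ ?_
        · exact le_trans (inf_le_inf_right x inf_le_left) hpx
        · exact le_trans (inf_le_inf_right y inf_le_right) hqy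
      exact hPdisj _ hm hle

/-- If Q is a descending chain of prime filters and v j witnesses Q(j-1) \ Q j,
then eval (dTerm k) ∉ Q k. -/
lemma dTerm_not_mem (v : ℕ → α) : ∀ (k : ℕ) (Q : ℕ → Set α),
    (∀ i ≤ k, IsPrimeFilter (Q i)) → (∀ i < k, Q (i + 1) ⊆ Q i) →
    (∀ j, 1 ≤ j → j ≤ k → v j ∈ Q (j - 1) ∧ v j ∉ Q j) →
    (dTerm k).eval v ∉ Q k := by
  intro k
  induction k with
  | zero =>
    intro Q hprime _ _
    exact fun h => bot_not_mem_of_prime (hprime 0 le_rfl) h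
  | succ k ih =>
    intro Q hprime hmono hv
    intro hmem
    have hpk1 := hprime (k + 1) le_rfl
    simp only [dTerm, HTerm.eval] at hmem
    rcases hpk1.2.2.2.2 _ _ hmem with h | h
    · exact (hv (k + 1) (by omega) le_rfl).2 h
    · -- v (k+1) ⇨ eval d_k ∈ Q (k+1) ⊆ Q k, v (k+1) ∈ Q k
      have hsub : Q (k + 1) ⊆ Q k := hmono k (by omega)
      have h1 : v (k + 1) ⇨ (dTerm k).eval v ∈ Q k := hsub h
      have h2 : v (k + 1) ∈ Q k := by
        have := (hv (k + 1) (by omega) le_rfl).1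
        simpa using this
      have hpk := hprime k (by omega)
      have h3 : v (k + 1) ⊓ (v (k + 1) ⇨ (dTerm k).eval v) ∈ Q k :=
        hpk.2.2.2.1 _ h2 _ h1
      have h4 : (dTerm k).eval v ∈ Q k :=
        hpk.2.2.1 _ h3 _ (by simp [inf_himp_le])
      exact ih Q (fun i hi => hprime i (by omega)) (fun i hi => hmono i (by omega))
        (fun j hj hjk => hv j hj (by omega)) h4

/-- building a chain above a prime filter missing eval (dTerm k) -/
lemma exists_chain (v : ℕ → α) : ∀ (k : ℕ) (P : Set α), IsPrimeFilter P →
    (dTerm k).eval v ∉ P →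
    ∃ C : ℕ → Set α, C 0 = P ∧ (∀ i ≤ k, IsPrimeFilter (C i)) ∧
      ∀ i < k, C i ⊂ C (i + 1) := by
  intro k
  induction k with
  | zero =>
    intro P hP _
    exact ⟨fun _ => P, rfl, fun i _ => hP, fun i hi => absurd hi (by omega)⟩
  | succ k ih =>
    intro P hP hnot
    simp only [dTerm, HTerm.eval] at hnot
    set a := v (k + 1) with ha
    set b := (dTerm k).eval v with hb
    have haP : a ∉ P := fun h => hnot (hP.2.2.1 a h _ le_sup_left)
    have himpP : a ⇨ b ∉ P := fun h => hnot (hP.2.2.1 _ h _ le_sup_right)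
    -- filter generated by P ∪ {a}
    set Q : Set α := {w | ∃ p ∈ P, p ⊓ a ≤ w} with hQ
    have hQfil : IsFilter' Q := by
      refine ⟨⟨a, ⊤, top_mem_of_prime hP, by simp⟩, ?_, ?_⟩
      · rintro x ⟨p, hp, hle⟩ y hxy
        exact ⟨p, hp, hle.trans hxy⟩
      · rintro x ⟨p, hp, hle⟩ y ⟨q, hq, hle'⟩
        exact ⟨p ⊓ q, hP.2.2.2.1 p hp q hq,
          by rw [inf_inf_distrib_right]; exact inf_le_inf hle hle'⟩
    have hQdisj : ∀ x ∈ Q, ¬ x ≤ b := by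
      rintro x ⟨p, hp, hle⟩ hxb
      exact himpP (hP.2.2.1 p hp _ (le_himp_iff.2 (hle.trans hxb)))
    obtain ⟨P', hP', hQP', hP'disj⟩ := exists_prime_extension Q hQfil b hQdisj
    have hPP' : P ⊆ P' := fun p hp => hQP' ⟨p, hp, inf_le_left⟩
    have haP' : a ∈ P' := hQP' ⟨⊤, top_mem_of_prime hP, by simp⟩
    have hss : P ⊂ P' := ⟨hPP', fun h => haP (h haP')⟩
    have hbP' : b ∉ P' := fun h => hP'disj b h le_rfl
    obtain ⟨C, hC0, hCprime, hCss⟩ := ih P' hP' hbP'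
    refine ⟨fun i => Nat.rec P (fun j _ => C j) i, rfl, ?_, ?_⟩
    · intro i hi
      cases i with
      | zero => exact hP
      | succ j => exact hCprime j (by omega)
    · intro i hi
      cases i with
      | zero => simpa [hC0] using hss
      | succ j => exact hCss j (by omega)

omit [HeytingAlgebra α] in
lemma chain_trans {C : ℕ → Set α} {n : ℕ} (h : ∀ i < n, C i ⊂ C (i + 1)) :
    ∀ j ≤ n, ∀ i < j, C i ⊂ C j := by
  intro j
  induction j with
  | zero => omega
  | succ j ih =>
    intro hj i hi
    rcases Nat.lt_or_ge i j with h' | h'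
    · exact (ih (by omega) i h').trans (h j (by omega))
    · have : i = j := by omega
      subst this
      exact h i (by omega)

end Aux

theorem depth_iff_dTerm (n : ℕ) (hn : 1 ≤ n) :
    (∀ A : HAlg, DepthAtMost n A ↔ Models A.carrier (dTerm n) HTerm.top) ∧
    IsVariety (fun A => DepthAtMost n A) := by
  have main : ∀ A : HAlg, DepthAtMost n A ↔ Models A.carrier (dTerm n) HTerm.top := by
    intro A
    constructor
    · -- depth ≤ n → d_n = ⊤
      intro hdepth v
      by_contra hne
      have hne' : (dTerm n).eval v ≠ ⊤ := by simpa [HTerm.eval] using hne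
      have hF : IsFilter' ({⊤} : Set A.carrier) := by
        refine ⟨⟨⊤, rfl⟩, ?_, ?_⟩
        · rintro x rfl y hy
          exact le_antisymm le_top hy |>.symm ▸ rfl
        · rintro x rfl y rfl; simp
      have hdisj : ∀ x ∈ ({⊤} : Set A.carrier), ¬ x ≤ (dTerm n).eval v := by
        rintro x rfl hle
        exact hne' (le_antisymm le_top hle)
      obtain ⟨P, hP, _, hPdisj⟩ := exists_prime_extension _ hF _ hdisj
      have hbP : (dTerm n).eval v ∉ P := fun h => hPdisj _ h le_rfl
      obtain ⟨C, hC0, hCprime, hCss⟩ := exists_chain v n P hP hbP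
      refine hdepth (fun i => C i) (fun i => hCprime i (by omega)) ?_
      intro i j hij
      exact chain_trans hCss j (by omega) i hij
    · -- d_n = ⊤ → depth ≤ n
      intro hmod G hGprime hGchain
      -- descending reindexing
      set Q : ℕ → Set A.carrier := fun i => G ⟨n - i, by omega⟩ with hQ
      have hGmono : ∀ i j : Fin (n+1), i < j → G i ⊆ G j :=
        fun i j hij => (hGchain i j hij).1
      have hdiff : ∀ j, 1 ≤ j → j ≤ n → ∃ x, x ∈ Q (j - 1) ∧ x ∉ Q j := by
        intro j h1 h2
        have hss : G ⟨n - j, by omega⟩ ⊂ G ⟨n - (j - 1), by omega⟩ := by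
          apply hGchain
          simp only [Fin.mk_lt_mk]
          omega
        obtain ⟨x, hx1, hx2⟩ := Set.exists_of_ssubset hss
        exact ⟨x, hx1, hx2⟩
      classical
      set v : ℕ → A.carrier := fun j =>
        if h : 1 ≤ j ∧ j ≤ n then (hdiff j h.1 h.2).choose else ⊤ with hv
      have hvspec : ∀ j, 1 ≤ j → j ≤ n → v j ∈ Q (j - 1) ∧ v j ∉ Q j := by
        intro j h1 h2
        simp only [hv, dif_pos (And.intro h1 h2)]
        exact (hdiff j h1 h2).choose_spec
      have hnot : (dTerm n).eval v ∉ Q n := by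
        apply dTerm_not_mem v n Q
        · intro i _; exact hGprime _
        · intro i hi
          apply hGmono
          simp only [Fin.mk_lt_mk]
          omega
        · exact hvspec
      apply hnot
      have : (dTerm n).eval v = ⊤ := by simpa [HTerm.eval] using hmod v
      rw [this]
      exact top_mem_of_prime (hGprime _)
  refine ⟨main, ⟨{(dTerm n, HTerm.top)}, fun A => ?_⟩⟩
  refine Iff.trans (main A) ⟨fun h p hp => ?_, fun h => h _ rfl⟩
  simp only [Set.mem_singleton_iff] at hp
  subst hp
  exact h
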